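/- If I = LC(I1, I2, r), then trees(I) = trees(I1) + 1 + trees(I2) - r. -/

import Mathlib

/-- An interval-poset: a partial order on `{1,…,n}` such that for `a < b < c`,
`a ≺ c` implies `b ≺ c` and `c ≺ a` implies `b ≺ a`. -/
structure IPoset where
  n : ℕ
  rel : ℕ → ℕ → Prop
  supp : ∀ ⦃a b⦄, rel a b → 1 ≤ a ∧ a ≤ n ∧ 1 ≤ b ∧ b ≤ n
  refl : ∀ a, 1 ≤ a → a ≤ n → rel a a
  antisymm : ∀ ⦃a b⦄, rel a b → rel b a → a = b
  trans : ∀ ⦃a b c⦄, rel a b → rel b c → rel a c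
  inc : ∀ ⦃a b c⦄, a < b → b < c → rel a c → rel b c
  dec : ∀ ⦃a b c⦄, a < b → b < c → rel c a → rel b a

open scoped Classical in
/-- The initial rise `ir I`: the largest `k ≤ n` such that no relation
`i-1 ≺ i` holds for `2 ≤ i ≤ k`. -/
noncomputable def ir (I : IPoset) : ℕ :=
  Nat.findGreatest (fun k => ∀ i, 2 ≤ i → i ≤ k → ¬ I.rel (i - 1) i) I.n

/-- `x` is a root of the final forest (the forest of decreasing relations) of `I`. -/
def IsDecRoot (I : IPoset) (x : ℕ) : Prop :=
  1 ≤ x ∧ x ≤ I.n ∧ ∀ y, y < x → ¬ I.rel x y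

/-- `trees I`: the number of connected components of the final forest of `I`,
i.e. the number of its roots. -/
noncomputable def trees (I : IPoset) : ℕ := Set.ncard {x | IsDecRoot I x}

/-- The relation of the lower-contacts composition `LC(I₁, I₂, r)`: shifted
concatenation of `I₁`, a new vertex `k = n₁ + 1`, and `I₂`, where every vertex
of `I₁` precedes `k` and the vertices below one of the `r` smallest roots of
the final forest of `I₂` precede `k`. -/
def LCrel (I1 I2 : IPoset) (r : ℕ) : ℕ → ℕ → Prop := fun x y =>
  let k := I1.n + 1
  (x ≤ I1.n ∧ y ≤ I1.n ∧ I1.rel x y) ∨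
  (k < x ∧ k < y ∧ I2.rel (x - k) (y - k)) ∨
  (x = k ∧ y = k) ∨
  (y = k ∧ 1 ≤ x ∧ x ≤ I1.n) ∨
  (y = k ∧ k < x ∧ x ≤ k + I2.n ∧
    ∃ s, IsDecRoot I2 s ∧ Set.ncard {z | IsDecRoot I2 z ∧ z ≤ s} ≤ r ∧
      (x - k = s ∨ (s < x - k ∧ I2.rel (x - k) s)))

open scoped Classical

lemma rank_lt_rank (S : Finset ℕ) {m m' : ℕ} (hm' : m' ∈ S) (h : m < m') :
    (S.filter (· ≤ m)).card < (S.filter (· ≤ m')).card := by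
  apply Finset.card_lt_card
  rw [Finset.ssubset_iff_of_subset]
  · exact ⟨m', Finset.mem_filter.mpr ⟨hm', le_refl _⟩, by simp; omega⟩
  · intro z hz
    simp only [Finset.mem_filter] at hz ⊢
    exact ⟨hz.1, hz.2.trans h.le⟩

lemma rank_injOn (S : Finset ℕ) :
    Set.InjOn (fun m => (S.filter (· ≤ m)).card) S := by
  intro a ha b hb hab
  by_contra hne
  rcases lt_or_gt_of_ne hne with h | h
  · exact absurd hab (rank_lt_rank S hb h).ne
  · exact absurd hab.symm (rank_lt_rank S ha h).ne

lemma rank_image (S : Finset ℕ) :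
    S.image (fun m => (S.filter (· ≤ m)).card) = Finset.Icc 1 S.card := by
  apply Finset.eq_of_subset_of_card_le
  · intro v hv
    simp only [Finset.mem_image] at hv
    obtain ⟨m, hm, rfl⟩ := hv
    simp only [Finset.mem_Icc]
    constructor
    · exact Finset.card_pos.mpr ⟨m, Finset.mem_filter.mpr ⟨hm, le_refl _⟩⟩
    · exact Finset.card_le_card (Finset.filter_subset _ _)
  · rw [Nat.card_Icc, Finset.card_image_of_injOn (rank_injOn S)]
    omega

lemma filter_rank_le (S : Finset ℕ) (r : ℕ) :
    (S.filter (fun m => (S.filter (· ≤ m)).card ≤ r)).card = min r S.card := by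
  have h1 : (S.filter (fun m => (S.filter (· ≤ m)).card ≤ r)).card
      = ((S.filter (fun m => (S.filter (· ≤ m)).card ≤ r)).image
          (fun m => (S.filter (· ≤ m)).card)).card := by
    rw [Finset.card_image_of_injOn ((rank_injOn S).mono (fun x hx => (Finset.mem_filter.mp hx).1))]
  have h2 := Finset.filter_image (s := S) (f := fun m => (S.filter (· ≤ m)).card)
    (p := (· ≤ r))
  rw [h1, ← h2, rank_image]
  have : (Finset.Icc 1 S.card).filter (fun v => v ≤ r) = Finset.Icc 1 (min S.card r) := by
    ext v; simp only [Finset.mem_filter, Finset.mem_Icc]; omega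
  rw [this, Nat.card_Icc]
  omega

lemma roots_finite (I : IPoset) : {x | IsDecRoot I x}.Finite :=
  (Set.finite_Icc 1 I.n).subset (fun x hx => ⟨hx.1, hx.2.1⟩)

lemma root_char (I1 I2 J : IPoset) (r : ℕ)
    (hn : J.n = I1.n + I2.n + 1)
    (hrel : ∀ x y, J.rel x y ↔ LCrel I1 I2 r x y) (x : ℕ) :
    IsDecRoot J x ↔ IsDecRoot I1 x ∨ x = I1.n + 1 ∨
      (I1.n + 1 < x ∧ IsDecRoot I2 (x - (I1.n + 1)) ∧
        r < Set.ncard {z | IsDecRoot I2 z ∧ z ≤ x - (I1.n + 1)}) := by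
  set k := I1.n + 1 with hk
  constructor
  · rintro ⟨hx1, hxn, hroot⟩
    by_cases hle : x ≤ I1.n
    · left
      refine ⟨hx1, hle, ?_⟩
      intro y hy hIy
      have hsupp := I1.supp hIy
      exact hroot y hy ((hrel x y).mpr (Or.inl ⟨hle, hsupp.2.2.2, hIy⟩))
    by_cases hxk : x = k
    · exact Or.inr (Or.inl hxk)
    have hgt : k < x := by omega
    have hx2 : x - k ≤ I2.n := by omega
    have hroot2 : IsDecRoot I2 (x - k) := by
      refine ⟨by omega, hx2, ?_⟩
      intro y hy hIy
      have hs := I2.supp hIy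
      apply hroot (y + k) (by omega)
      apply (hrel _ _).mpr
      refine Or.inr (Or.inl ⟨hgt, by omega, ?_⟩)
      simpa [hk] using hIy
    refine Or.inr (Or.inr ⟨hgt, hroot2, ?_⟩)
    by_contra hrk
    push_neg at hrk
    apply hroot k (by omega)
    apply (hrel _ _).mpr
    exact Or.inr (Or.inr (Or.inr (Or.inr
      ⟨rfl, hgt, by omega, x - k, hroot2, hrk, Or.inl rfl⟩)))
  · rintro (⟨hx1, hxn, hroot⟩ | rfl | ⟨hgt, ⟨h1, h2, hroot⟩, hrk⟩)
    · refine ⟨hx1, by omega, ?_⟩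
      intro y hy hJ
      rcases (hrel x y).mp hJ with ⟨_, _, h⟩ | ⟨h, _, _⟩ | ⟨h, _⟩ | ⟨h, _, _⟩ | ⟨h, _⟩
      · exact hroot y hy h
      · omega
      · omega
      · omega
      · omega
    · refine ⟨by omega, by omega, ?_⟩
      intro y hy hJ
      rcases (hrel _ _).mp hJ with ⟨h, _, _⟩ | ⟨h, _, _⟩ | ⟨_, h⟩ | ⟨h, _, _⟩ | ⟨h, _⟩ <;> omega
    · refine ⟨by omega, by omega, ?_⟩
      intro y hy hJ
      rcases (hrel x y).mp hJ with ⟨hxl, _, _⟩ | ⟨_, hky, hI⟩ | ⟨hxe, _⟩ | ⟨_, _, hxl⟩ |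
        ⟨hyk, _, _, s, hs, hsr, hcase⟩
      · omega
      · exact hroot (y - k) (by omega) hI
      · omega
      · omega
      · rcases hcase with he | ⟨hlt, hI⟩
        · rw [he] at hrk; omega
        · exact hroot s hlt hI

/-- If `I = LC(I₁, I₂, r)`, then `trees I = trees I₁ + 1 + trees I₂ - r`. -/
theorem trees_of_lower_contacts (I1 I2 J : IPoset) (r : ℕ) (hr : r ≤ trees I2)
    (hn : J.n = I1.n + I2.n + 1)
    (hrel : ∀ x y, J.rel x y ↔ LCrel I1 I2 r x y) :
    trees J = trees I1 + 1 + trees I2 - r := by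
  set k := I1.n + 1 with hk
  have hfin1 := roots_finite I1
  have hfin2 := roots_finite I2
  set S : Finset ℕ := hfin2.toFinset with hSdef
  have hS : ∀ z, z ∈ S ↔ IsDecRoot I2 z := fun z => hfin2.mem_toFinset
  have hrank : ∀ m, Set.ncard {z | IsDecRoot I2 z ∧ z ≤ m} = (S.filter (· ≤ m)).card := by
    intro m
    have : {z | IsDecRoot I2 z ∧ z ≤ m} = ↑(S.filter (· ≤ m)) := by
      ext z; simp [hS z]
    rw [this, Set.ncard_coe_finset]
  have hT2 : trees I2 = S.card := by
    rw [trees, ← Set.ncard_coe_finset]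
    congr 1
    simp [hSdef, Set.Finite.coe_toFinset]
  set B2 : Set ℕ := {m | IsDecRoot I2 m ∧ r < Set.ncard {z | IsDecRoot I2 z ∧ z ≤ m}} with hB2
  have hB2fin : B2.Finite := hfin2.subset (fun m hm => hm.1)
  have hset : {x | IsDecRoot J x} =
      {x | IsDecRoot I1 x} ∪ ({k} ∪ (fun m => m + k) '' B2) := by
    ext x
    simp only [Set.mem_setOf_eq, Set.mem_union, Set.mem_singleton_iff, Set.mem_image, hB2]
    rw [root_char I1 I2 J r hn hrel x]
    constructor
    · rintro (h | h | ⟨hgt, hroot, hrk⟩)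
      · exact Or.inl h
      · exact Or.inr (Or.inl h)
      · exact Or.inr (Or.inr ⟨x - k, ⟨hroot, hrk⟩, by omega⟩)
    · rintro (h | h | ⟨m, ⟨hm, hrk⟩, rfl⟩)
      · exact Or.inl h
      · exact Or.inr (Or.inl h)
      · refine Or.inr (Or.inr ⟨by have := hm.1; omega, ?_, ?_⟩)
        · simpa [hk] using hm
        · simpa [hk] using hrk
  have himfin : ((fun m => m + k) '' B2).Finite := hB2fin.image _
  have hdisj2 : Disjoint ({k} : Set ℕ) ((fun m => m + k) '' B2) := by
    rw [Set.disjoint_left]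
    rintro a rfl ⟨m, hm, he⟩
    have he' : m + k = k := he
    have := hm.1.1
    omega
  have hdisj1 : Disjoint {x | IsDecRoot I1 x} (({k} : Set ℕ) ∪ (fun m => m + k) '' B2) := by
    rw [Set.disjoint_left]
    rintro a ha (rfl | ⟨m, hm, he⟩)
    · have := ha.2.1; omega
    · have he' : m + k = a := he
      have h1 := ha.2.1
      have h2 := hm.1.1
      omega
  have hcard : trees J = trees I1 + (1 + B2.ncard) := by
    rw [trees, hset, Set.ncard_union_eq hdisj1 hfin1 ((Set.finite_singleton k).union himfin),
      Set.ncard_union_eq hdisj2 (Set.finite_singleton k) himfin, Set.ncard_singleton,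
      Set.ncard_image_of_injective _ (add_left_injective k)]
    rfl
  have hB2card : B2.ncard = S.card - r := by
    have he : B2 = ↑(S.filter (fun m => ¬ ((S.filter (· ≤ m)).card ≤ r))) := by
      ext m
      simp only [hB2, Set.mem_setOf_eq, Finset.coe_filter, hS m, hrank m, not_le]
    rw [he, Set.ncard_coe_finset]
    have hsplit := Finset.card_filter_add_card_filter_not
      (s := S) (p := fun m => (S.filter (· ≤ m)).card ≤ r)
    have := filter_rank_le S r
    rw [hT2] at hr
    omega
  rw [hcard, hB2card, hT2]
  rw [hT2] at hr
  omega
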